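/- Let (Ω, P) be a probability space and let X, W : Ω → ℝ be independent random variables with X distributed as the Gaussian measure with mean μ and variance σ² and W distributed as the Gaussian measure with mean 0 and variance σ², where σ² > 0. For any real τ > 0, the random variables X⁽¹⁾ = X + τ·W and X⁽²⁾ = X − (1/τ)·W are independent. -/

import Mathlib

open MeasureTheory ProbabilityTheory Real
open scoped NNReal

section Aux

/-- The linear equivalence `(x, w) ↦ (x + τ w, x - w/τ)` used in data fission. -/
noncomputable def fissionMap (τ : ℝ) (hτ : 0 < τ) : (ℝ × ℝ) ≃ₗ[ℝ] (ℝ × ℝ) where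
  toFun p := (p.1 + τ * p.2, p.1 - (1 / τ) * p.2)
  invFun q := ((q.1 + τ ^ 2 * q.2) / (1 + τ ^ 2), τ * (q.1 - q.2) / (1 + τ ^ 2))
  map_add' p q := by
    refine Prod.ext ?_ ?_ <;> simp <;> ring
  map_smul' c p := by
    refine Prod.ext ?_ ?_ <;> simp [Prod.smul_fst, Prod.smul_snd, smul_eq_mul] <;> ring
  left_inv p := by
    have h0 : τ ≠ 0 := hτ.ne'
    have h1 : (1 : ℝ) + τ ^ 2 ≠ 0 := by positivity
    refine Prod.ext ?_ ?_ <;> · simp only; field_simp; ring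
  right_inv q := by
    have h0 : τ ≠ 0 := hτ.ne'
    have h1 : (1 : ℝ) + τ ^ 2 ≠ 0 := by positivity
    refine Prod.ext ?_ ?_ <;> · simp only; field_simp; ring

lemma fissionMap_symm_apply (τ : ℝ) (hτ : 0 < τ) (q : ℝ × ℝ) :
    (fissionMap τ hτ).symm q
      = ((q.1 + τ ^ 2 * q.2) / (1 + τ ^ 2), τ * (q.1 - q.2) / (1 + τ ^ 2)) := rfl

lemma fissionMap_symm_det (τ : ℝ) (hτ : 0 < τ) :
    LinearMap.det ((fissionMap τ hτ).symm : (ℝ × ℝ) →ₗ[ℝ] (ℝ × ℝ))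
      = -(τ / (1 + τ ^ 2)) := by
  have h1 : (1 : ℝ) + τ ^ 2 ≠ 0 := by positivity
  have hmat : ((fissionMap τ hτ).symm : (ℝ × ℝ) →ₗ[ℝ] (ℝ × ℝ))
      = Matrix.toLin (Module.Basis.finTwoProd ℝ) (Module.Basis.finTwoProd ℝ)
          !![1 / (1 + τ ^ 2), τ ^ 2 / (1 + τ ^ 2);
             τ / (1 + τ ^ 2), -(τ / (1 + τ ^ 2))] := by
    apply LinearMap.ext
    intro q
    rw [Matrix.toLin_finTwoProd_apply]
    show (fissionMap τ hτ).symm q = _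
    rw [fissionMap_symm_apply]
    refine Prod.ext ?_ ?_ <;> (simp only []; field_simp; try ring)
  rw [hmat, ← LinearMap.det_toMatrix (Module.Basis.finTwoProd ℝ), LinearMap.toMatrix_toLin,
    Matrix.det_fin_two_of]
  field_simp
  ring

/-- Product of two nondegenerate Gaussian measures as a density w.r.t. `volume` on `ℝ × ℝ`. -/
lemma prod_gaussian_eq (μ₁ μ₂ : ℝ) {v₁ v₂ : ℝ≥0} (h₁ : v₁ ≠ 0) (h₂ : v₂ ≠ 0) :
    (gaussianReal μ₁ v₁).prod (gaussianReal μ₂ v₂)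
      = (volume : Measure (ℝ × ℝ)).withDensity
          (fun p => gaussianPDF μ₁ v₁ p.1 * gaussianPDF μ₂ v₂ p.2) := by
  refine Measure.prod_eq fun s t hs ht => ?_
  rw [withDensity_apply _ (hs.prod ht), Measure.volume_eq_prod, ← Measure.prod_restrict,
    lintegral_prod_mul (measurable_gaussianPDF _ _).aemeasurable
      (measurable_gaussianPDF _ _).aemeasurable,
    gaussianReal_of_var_ne_zero _ h₁, gaussianReal_of_var_ne_zero _ h₂,
    withDensity_apply _ hs, withDensity_apply _ ht]

lemma gaussian_pdf_identity (μ σ2 τ : ℝ) (hσ2 : 0 < σ2) (hτ : 0 < τ) (u v : ℝ) :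
    τ / (1 + τ ^ 2) *
      (gaussianPDFReal μ σ2.toNNReal ((u + τ ^ 2 * v) / (1 + τ ^ 2)) *
        gaussianPDFReal 0 σ2.toNNReal (τ * (u - v) / (1 + τ ^ 2)))
    = gaussianPDFReal μ (σ2 * (1 + τ ^ 2)).toNNReal u *
        gaussianPDFReal μ (σ2 * (1 + 1 / τ ^ 2)).toNNReal v := by
  have h0 : τ ≠ 0 := hτ.ne'
  have h1 : (0 : ℝ) < 1 + τ ^ 2 := by positivity
  have hA : (0 : ℝ) < σ2 * (1 + τ ^ 2) := by positivity
  have hB : (0 : ℝ) < σ2 * (1 + 1 / τ ^ 2) := by positivity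
  have hC : (0 : ℝ) < 2 * π * σ2 := by positivity
  have hCA : (0 : ℝ) < 2 * π * (σ2 * (1 + τ ^ 2)) := by positivity
  have hCB : (0 : ℝ) < 2 * π * (σ2 * (1 + 1 / τ ^ 2)) := by positivity
  simp only [gaussianPDFReal, Real.coe_toNNReal _ hσ2.le, Real.coe_toNNReal _ hA.le,
    Real.coe_toNNReal _ hB.le]
  -- constants
  have hconst : τ / (1 + τ ^ 2) * ((√(2 * π * σ2))⁻¹ * (√(2 * π * σ2))⁻¹)
      = (√(2 * π * (σ2 * (1 + τ ^ 2))))⁻¹ * (√(2 * π * (σ2 * (1 + 1 / τ ^ 2))))⁻¹ := by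
    have hsq : √(2 * π * (σ2 * (1 + τ ^ 2))) * √(2 * π * (σ2 * (1 + 1 / τ ^ 2)))
        = (1 + τ ^ 2) / τ * (2 * π * σ2) := by
      rw [← Real.sqrt_mul hCA.le]
      have : 2 * π * (σ2 * (1 + τ ^ 2)) * (2 * π * (σ2 * (1 + 1 / τ ^ 2)))
          = ((1 + τ ^ 2) / τ * (2 * π * σ2)) ^ 2 := by
        field_simp
        ring
      rw [this, Real.sqrt_sq (by positivity)]
    have hss : √(2 * π * σ2) * √(2 * π * σ2) = 2 * π * σ2 :=
      Real.mul_self_sqrt hC.le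
    rw [← mul_inv, ← mul_inv, hsq, hss]
    rw [eq_comm, mul_inv, inv_div]
  -- exponentials
  have hexp : rexp (-((u + τ ^ 2 * v) / (1 + τ ^ 2) - μ) ^ 2 / (2 * σ2)) *
        rexp (-(τ * (u - v) / (1 + τ ^ 2) - 0) ^ 2 / (2 * σ2))
      = rexp (-(u - μ) ^ 2 / (2 * (σ2 * (1 + τ ^ 2)))) *
        rexp (-(v - μ) ^ 2 / (2 * (σ2 * (1 + 1 / τ ^ 2)))) := by
    rw [← Real.exp_add, ← Real.exp_add]
    congr 1
    field_simp
    ring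
  calc τ / (1 + τ ^ 2) *
      ((√(2 * π * σ2))⁻¹ * rexp (-((u + τ ^ 2 * v) / (1 + τ ^ 2) - μ) ^ 2 / (2 * σ2)) *
        ((√(2 * π * σ2))⁻¹ * rexp (-(τ * (u - v) / (1 + τ ^ 2) - 0) ^ 2 / (2 * σ2))))
      = (τ / (1 + τ ^ 2) * ((√(2 * π * σ2))⁻¹ * (√(2 * π * σ2))⁻¹)) *
        (rexp (-((u + τ ^ 2 * v) / (1 + τ ^ 2) - μ) ^ 2 / (2 * σ2)) *
          rexp (-(τ * (u - v) / (1 + τ ^ 2) - 0) ^ 2 / (2 * σ2))) := by ring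
    _ = ((√(2 * π * (σ2 * (1 + τ ^ 2))))⁻¹ * (√(2 * π * (σ2 * (1 + 1 / τ ^ 2))))⁻¹) *
        (rexp (-(u - μ) ^ 2 / (2 * (σ2 * (1 + τ ^ 2)))) *
          rexp (-(v - μ) ^ 2 / (2 * (σ2 * (1 + 1 / τ ^ 2))))) := by rw [hconst, hexp]
    _ = _ := by ring

/-- Pushforward of the product of Gaussians under the fission map. -/
lemma map_fission (μ σ2 : ℝ) (hσ2 : 0 < σ2) (τ : ℝ) (hτ : 0 < τ) :
    ((gaussianReal μ σ2.toNNReal).prod (gaussianReal 0 σ2.toNNReal)).map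
        (fun p : ℝ × ℝ => (p.1 + τ * p.2, p.1 - (1 / τ) * p.2))
      = (gaussianReal μ (σ2 * (1 + τ ^ 2)).toNNReal).prod
          (gaussianReal μ (σ2 * (1 + 1 / τ ^ 2)).toNNReal) := by
  have h0 : τ ≠ 0 := hτ.ne'
  have h1 : (0 : ℝ) < 1 + τ ^ 2 := by positivity
  have hv : σ2.toNNReal ≠ 0 := by
    simp [Real.toNNReal_eq_zero, not_le, hσ2]
  have hvU : (σ2 * (1 + τ ^ 2)).toNNReal ≠ 0 := by
    simp only [ne_eq, Real.toNNReal_eq_zero, not_le]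
    positivity
  have hvV : (σ2 * (1 + 1 / τ ^ 2)).toNNReal ≠ 0 := by
    simp only [ne_eq, Real.toNNReal_eq_zero, not_le]
    positivity
  set e := (fissionMap τ hτ).toContinuousLinearEquiv with he_def
  have he : (fun p : ℝ × ℝ => (p.1 + τ * p.2, p.1 - (1 / τ) * p.2)) = ⇑e := rfl
  have hemeas : Measurable (fun p : ℝ × ℝ => (p.1 + τ * p.2, p.1 - (1 / τ) * p.2)) := by
    fun_prop
  rw [prod_gaussian_eq _ _ hv hv, prod_gaussian_eq _ _ hvU hvV]
  ext s hs
  rw [Measure.map_apply hemeas hs, withDensity_apply _ (hemeas hs), withDensity_apply _ hs]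
  have hpre : (fun p : ℝ × ℝ => (p.1 + τ * p.2, p.1 - (1 / τ) * p.2)) ⁻¹' s
      = ⇑e.symm '' s := by
    rw [he]
    ext p
    simp only [Set.mem_preimage, Set.mem_image]
    constructor
    · exact fun h => ⟨e p, h, e.symm_apply_apply p⟩
    · rintro ⟨q, hq, rfl⟩
      simpa [e.apply_symm_apply] using hq
  rw [hpre]
  have hderiv : ∀ x ∈ s, HasFDerivWithinAt (⇑e.symm)
      ((e.symm : (ℝ × ℝ) →L[ℝ] (ℝ × ℝ))) s x :=
    fun x _ => e.symm.hasFDerivAt.hasFDerivWithinAt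
  rw [lintegral_image_eq_lintegral_abs_det_fderiv_mul volume hs hderiv
    (e.symm.injective.injOn) _]
  refine setLIntegral_congr_fun hs (fun q _ => ?_)
  have hdet : ((e.symm : (ℝ × ℝ) →L[ℝ] (ℝ × ℝ))).det = -(τ / (1 + τ ^ 2)) := by
    rw [ContinuousLinearMap.det]
    exact fissionMap_symm_det τ hτ
  have habs : |((e.symm : (ℝ × ℝ) →L[ℝ] (ℝ × ℝ))).det| = τ / (1 + τ ^ 2) := by
    rw [hdet, abs_neg, abs_of_pos (by positivity)]
  have hsymmq : (⇑e.symm q : ℝ × ℝ)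
      = ((q.1 + τ ^ 2 * q.2) / (1 + τ ^ 2), τ * (q.1 - q.2) / (1 + τ ^ 2)) :=
    fissionMap_symm_apply τ hτ q
  rw [habs, hsymmq]
  simp only [gaussianPDF]
  rw [← ENNReal.ofReal_mul (gaussianPDFReal_nonneg _ _ _),
    ← ENNReal.ofReal_mul (by positivity),
    ← ENNReal.ofReal_mul (gaussianPDFReal_nonneg _ _ _)]
  congr 1
  exact gaussian_pdf_identity μ σ2 τ hσ2 hτ q.1 q.2

end Aux

theorem gaussian_data_fission_indep
    {Ω : Type*} [MeasurableSpace Ω] (P : Measure Ω) [IsProbabilityMeasure P]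
    (X W : Ω → ℝ) (hX : Measurable X) (hW : Measurable W)
    (hXW : IndepFun X W P)
    (μ : ℝ) (σ2 : ℝ) (hσ2 : 0 < σ2)
    (hXlaw : P.map X = gaussianReal μ σ2.toNNReal)
    (hWlaw : P.map W = gaussianReal 0 σ2.toNNReal)
    (τ : ℝ) (hτ : 0 < τ) :
    IndepFun (fun ω => X ω + τ * W ω) (fun ω => X ω - (1 / τ) * W ω) P := by
  set U : Ω → ℝ := fun ω => X ω + τ * W ω with hU_def
  set V : Ω → ℝ := fun ω => X ω - (1 / τ) * W ω with hV_def
  have hU : Measurable U := hX.add (measurable_const.mul hW)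
  have hV : Measurable V := hX.sub (measurable_const.mul hW)
  have hjoint : P.map (fun ω => (X ω, W ω))
      = (gaussianReal μ σ2.toNNReal).prod (gaussianReal 0 σ2.toNNReal) := by
    rw [← hXlaw, ← hWlaw]
    exact (indepFun_iff_map_prod_eq_prod_map_map hX.aemeasurable hW.aemeasurable).mp hXW
  have hT : Measurable (fun p : ℝ × ℝ => (p.1 + τ * p.2, p.1 - (1 / τ) * p.2)) := by
    fun_prop
  have hUV : P.map (fun ω => (U ω, V ω))
      = (gaussianReal μ (σ2 * (1 + τ ^ 2)).toNNReal).prod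
          (gaussianReal μ (σ2 * (1 + 1 / τ ^ 2)).toNNReal) := by
    have hcomp : (fun ω => (U ω, V ω))
        = (fun p : ℝ × ℝ => (p.1 + τ * p.2, p.1 - (1 / τ) * p.2)) ∘ (fun ω => (X ω, W ω)) :=
      rfl
    rw [hcomp, ← Measure.map_map hT (hX.prodMk hW), hjoint, map_fission μ σ2 hσ2 τ hτ]
  have hUlaw : P.map U = gaussianReal μ (σ2 * (1 + τ ^ 2)).toNNReal := by
    have : P.map U = (P.map (fun ω => (U ω, V ω))).map Prod.fst := by
      rw [Measure.map_map measurable_fst (hU.prodMk hV)]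
      rfl
    rw [this, hUV, Measure.map_fst_prod, measure_univ, one_smul]
  have hVlaw : P.map V = gaussianReal μ (σ2 * (1 + 1 / τ ^ 2)).toNNReal := by
    have : P.map V = (P.map (fun ω => (U ω, V ω))).map Prod.snd := by
      rw [Measure.map_map measurable_snd (hU.prodMk hV)]
      rfl
    rw [this, hUV, Measure.map_snd_prod, measure_univ, one_smul]
  refine (indepFun_iff_map_prod_eq_prod_map_map hU.aemeasurable hV.aemeasurable).mpr ?_
  rw [hUV, hUlaw, hVlaw]
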